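/- If A and B are finite subsets of an abelian group G with |A+B| ≤ K|A|, then any dissociated subset Λ of B satisfies |Λ| ≪ K log|A|, i.e., dim(B) = O(K log|A|). -/

import Mathlib

open Finset Pointwise

/-- A finite set `Λ` in an abelian group is dissociated if every `{-1,0,1}`-relation
`∑_{λ ∈ Λ} ε_λ • λ = 0` forces all coefficients `ε_λ` to vanish. -/
def Dissociated {G : Type*} [AddCommGroup G] (Λ : Finset G) : Prop :=
  ∀ ε : G → ℤ, (∀ g, ε g = -1 ∨ ε g = 0 ∨ ε g = 1) → (∀ g ∉ Λ, ε g = 0) →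
    ∑ g ∈ Λ, ε g • g = 0 → ∀ g, ε g = 0

/-- Sums of subsets of a finite set lie in the corresponding iterated sumset. -/
lemma sum_mem_nsmul_aux {G : Type*} [AddCommGroup G] [DecidableEq G] :
    ∀ (k : ℕ) (S Λ : Finset G), S ⊆ Λ → S.card = k → (∑ x ∈ S, x) ∈ k • Λ := by
  intro k
  induction k with
  | zero =>
    intro S Λ _ hcard
    rw [Finset.card_eq_zero] at hcard
    subst hcard
    simp [zero_nsmul, Finset.mem_zero]
  | succ k ih =>
    intro S Λ hsub hcard
    obtain ⟨a, ha⟩ : S.Nonempty := Finset.card_pos.mp (by omega)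
    have h1 : ∑ x ∈ S, x = a + ∑ x ∈ S.erase a, x := (Finset.add_sum_erase _ _ ha).symm
    rw [h1, succ_nsmul, add_comm (k • Λ) Λ]
    exact Finset.add_mem_add (hsub ha)
      (ih _ _ (fun x hx => hsub (Finset.mem_of_mem_erase hx))
        (by rw [Finset.card_erase_of_mem ha]; omega))

/-- On a dissociated set, subset sums are injective. -/
lemma sum_injOn_of_dissociated {G : Type*} [AddCommGroup G] [DecidableEq G]
    {Λ S T : Finset G} (hdis : Dissociated Λ)
    (hS : S ⊆ Λ) (hT : T ⊆ Λ) (h : ∑ x ∈ S, x = ∑ x ∈ T, x) : S = T := by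
  set ε : G → ℤ := fun g => (if g ∈ S then 1 else 0) - (if g ∈ T then 1 else 0) with hε
  have key : ∀ g, ε g = 0 := by
    apply hdis
    · intro g
      by_cases h1 : g ∈ S <;> by_cases h2 : g ∈ T <;> simp [hε, h1, h2]
    · intro g hg
      have h1 : g ∉ S := fun h' => hg (hS h')
      have h2 : g ∉ T := fun h' => hg (hT h')
      simp [hε, h1, h2]
    · have e1 : ∑ g ∈ Λ, ε g • g
          = (∑ g ∈ Λ, (if g ∈ S then (1:ℤ) else 0) • g)
            - (∑ g ∈ Λ, (if g ∈ T then (1:ℤ) else 0) • g) := by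
        rw [← Finset.sum_sub_distrib]
        exact Finset.sum_congr rfl (fun g _ => by rw [hε]; rw [sub_smul])
      have e2 : ∀ (U : Finset G), U ⊆ Λ →
          (∑ g ∈ Λ, (if g ∈ U then (1:ℤ) else 0) • g) = ∑ g ∈ U, g := by
        intro U hU
        have : (∑ g ∈ Λ, (if g ∈ U then (1:ℤ) else 0) • g)
            = ∑ g ∈ Λ, (if g ∈ U then g else 0) := by
          refine Finset.sum_congr rfl (fun g _ => ?_)
          by_cases hg : g ∈ U <;> simp [hg]
        rw [this, Finset.sum_ite_mem, Finset.inter_eq_right.mpr hU]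
      rw [e1, e2 S hS, e2 T hT, h, sub_self]
  ext g
  have := key g
  rw [hε] at this
  by_cases h1 : g ∈ S <;> by_cases h2 : g ∈ T <;> simp [h1, h2] at this ⊢

set_option maxHeartbeats 800000 in
/-- Sanders' theorem: if `|A+B| ≤ K|A|` then every dissociated subset of `B`
has cardinality `O(K log |A|)`, i.e. `dim B ≪ K log |A|`. -/
theorem stmt0 :
    ∃ C : ℝ, 0 < C ∧ ∀ (G : Type*) [AddCommGroup G] [DecidableEq G]
      (A B Λ : Finset G) (K : ℝ),
      2 ≤ A.card → ((A + B).card : ℝ) ≤ K * A.card →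
      Λ ⊆ B → Dissociated Λ →
      (Λ.card : ℝ) ≤ C * K * Real.log A.card := by
  refine ⟨40, by norm_num, ?_⟩
  intro G _ _ A B Λ K hA2 hAB hΛB hdis
  set a : ℝ := (A.card : ℝ) with ha_def
  have ha2 : (2:ℝ) ≤ a := by rw [ha_def]; exact_mod_cast hA2
  have ha0 : (0:ℝ) < a := by linarith
  have hlog2 : (0.6931471803 : ℝ) < Real.log 2 := Real.log_two_gt_d9
  have hloga2 : Real.log 2 ≤ Real.log a := Real.log_le_log (by norm_num) ha2
  have hloga0 : 0 < Real.log a := by linarith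
  have hK0 : 0 ≤ K := by
    have h0 : (0:ℝ) ≤ ((A + B).card : ℝ) := Nat.cast_nonneg _
    nlinarith
  set n : ℕ := Λ.card with hn_def
  rcases Nat.eq_zero_or_pos n with hn0 | hn1
  · rw [hn0]
    push_cast
    positivity
  -- Λ is nonempty, hence B is nonempty and K ≥ 1
  have hΛne : Λ.Nonempty := Finset.card_pos.mp hn1
  have hBne : B.Nonempty := ⟨hΛne.choose, hΛB hΛne.choose_spec⟩
  have hAne : A.Nonempty := Finset.card_pos.mp (by omega)
  have hK1 : (1:ℝ) ≤ K := by
    have h1 : A.card ≤ (A + B).card := Finset.card_le_card_add_right hBne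
    have h1' : a ≤ ((A + B).card : ℝ) := by rw [ha_def]; exact_mod_cast h1
    nlinarith
  set k : ℕ := ⌈Real.log a⌉₊ with hk_def
  have hk1 : 1 ≤ k := by
    rw [hk_def]
    exact Nat.one_le_iff_ne_zero.mpr (by positivity)
  have hk1' : (1:ℝ) ≤ (k:ℝ) := by exact_mod_cast hk1
  have hklog : Real.log a ≤ (k:ℝ) := Nat.le_ceil _
  have hkub : (k:ℝ) < Real.log a + 1 := Nat.ceil_lt_add_one hloga0.le
  by_cases hcase : (n:ℝ) ≤ 16 * K * k
  · -- main case : n ≤ 16 K k ≤ 40 K log a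
    nlinarith [mul_le_mul_of_nonneg_left hkub.le (by positivity : (0:ℝ) ≤ 16 * K),
      mul_le_mul_of_nonneg_left hloga2 (by positivity : (0:ℝ) ≤ 24 * K)]
  push_neg at hcase
  exfalso
  -- counting: binomial coefficient ≤ |k • Λ|
  have hcount : (n.choose k : ℝ) ≤ ((k • Λ).card : ℝ) := by
    have := Finset.card_le_card_of_injOn (s := Λ.powersetCard k) (t := k • Λ) (fun S => ∑ x ∈ S, x)
      (fun S hS => by
        rw [Finset.mem_coe, Finset.mem_powersetCard] at hS
        exact sum_mem_nsmul_aux k S Λ hS.1 hS.2)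
      (fun S hS T hT hST => by
        rw [Finset.mem_coe, Finset.mem_powersetCard] at hS hT
        exact sum_injOn_of_dissociated hdis hS.1 hT.1 hST)
    rw [Finset.card_powersetCard] at this
    exact_mod_cast this
  -- Plünnecke–Ruzsa : |k • Λ| ≤ K^k |A|
  have hplr : (((k • Λ).card : ℝ)) ≤ K ^ k * a := by
    have h1 : (((k • Λ).card : ℚ≥0)) ≤ (((A + Λ).card : ℚ≥0) / (A.card : ℚ≥0)) ^ k * (A.card : ℚ≥0) :=
      Finset.pluennecke_ruzsa_inequality_nsmul_add hAne Λ k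
    have h2 : (((k • Λ).card : ℝ)) ≤ (((A + Λ).card : ℝ) / a) ^ k * a := by
      have := (NNRat.cast_le (K := ℝ)).mpr h1
      push_cast at this
      exact_mod_cast this
    have h3 : ((A + Λ).card : ℝ) / a ≤ K := by
      rw [div_le_iff₀ ha0]
      calc ((A + Λ).card : ℝ) ≤ ((A + B).card : ℝ) := by
            exact_mod_cast Finset.card_le_card (Finset.add_subset_add_left hΛB)
        _ ≤ K * a := hAB
    calc (((k • Λ).card : ℝ)) ≤ (((A + Λ).card : ℝ) / a) ^ k * a := h2
      _ ≤ K ^ k * a := by gcongr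
  -- binomial lower bound : (8K)^k ≤ choose n k
  have hkn : k + 1 ≤ n + 1 := by
    have : (k:ℝ) < (n:ℝ) := by nlinarith
    have := Nat.cast_lt.mp this
    omega
  have hcast : ((n + 1 - k : ℕ) : ℝ) = (n:ℝ) + 1 - (k:ℝ) := by
    rw [Nat.cast_sub (by omega : k ≤ n + 1)]
    push_cast
    ring
  have hstepA : 8 * K * k ≤ ((n + 1 - k : ℕ) : ℝ) := by
    rw [hcast]
    nlinarith
  have hlow : (8 * K) ^ k ≤ (n.choose k : ℝ) := by
    have hb : (8 * K) ≤ ((n + 1 - k : ℕ) : ℝ) / k := by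
      rw [le_div_iff₀ (by linarith)]
      nlinarith
    calc (8 * K) ^ k ≤ (((n + 1 - k : ℕ) : ℝ) / k) ^ k :=
          pow_le_pow_left₀ (by positivity) hb k
      _ = ((n + 1 - k : ℕ) : ℝ) ^ k / (k:ℝ) ^ k := div_pow _ _ _
      _ ≤ ((n + 1 - k : ℕ) : ℝ) ^ k / (k.factorial : ℝ) := by
          apply div_le_div_of_nonneg_left (by positivity)
            (by exact_mod_cast k.factorial_pos)
          exact_mod_cast k.factorial_le_pow
      _ ≤ (n.choose k : ℝ) := Nat.pow_le_choose k n
  -- combine : 8^k ≤ a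
  have hcombined : (8 * K) ^ k ≤ K ^ k * a := le_trans hlow (le_trans hcount hplr)
  have h8k : (8:ℝ) ^ k ≤ a := by
    have hKk : (0:ℝ) < K ^ k := by positivity
    rw [mul_pow, mul_comm (K ^ k) a] at hcombined
    exact (mul_le_mul_iff_of_pos_right hKk).mp hcombined
  have hlog8 : Real.log 8 = 3 * Real.log 2 := by
    rw [show (8:ℝ) = 2 ^ 3 by norm_num, Real.log_pow]
    push_cast
    ring
  have hfin : (k:ℝ) * Real.log 8 ≤ Real.log a :=
    Real.log_pow 8 k ▸ Real.log_le_log (by positivity) h8k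
  rw [hlog8] at hfin
  nlinarith
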